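/- arXiv:0711.4689 — 3 statements merged into one kernel-verified Lean document; each statement's English description precedes it below -/
import Mathlib

section
/- Let A and B be groups and let G be a subgroup of the free product A * B. Then the kernel of the restriction to G of the canonical projection q : A * B → A × B is a free group. -/
open CategoryTheory CategoryTheory.ActionCategory CategoryTheory.SingleObj MulAction Monoid IsFreeGroupoid

lemma mulAutArrow_apply' {G A M : Type*} [Group G] [MulAction G A] [Monoid M]
    (g : G) (F : A → M) (a : A) : mulAutArrow g F a = F (g⁻¹ • a) := rfl

def cob {C S X : Type*} [Group C] [Group X] [MulAction C S] (F : S → X) :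
    C →* (S → X) ⋊[mulAutArrow] C where
  toFun g := ⟨fun t => F t * (F (g⁻¹ • t))⁻¹, g⟩
  map_one' := by
    ext t
    · simp
    · rfl
  map_mul' g h := by
    ext t
    · show F t * (F ((g * h)⁻¹ • t))⁻¹ =
        (fun t => F t * (F (g⁻¹ • t))⁻¹) t *
          (mulAutArrow g (fun t => F t * (F (h⁻¹ • t))⁻¹)) t
      rw [mulAutArrow_apply']
      dsimp only
      rw [mul_inv_rev, mul_smul]
      group
    · rfl

@[simp] lemma cob_left {C S X : Type*} [Group C] [Group X] [MulAction C S] (F : S → X)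
    (g : C) (t : S) : ((cob F g).left : S → X) t = F t * (F (g⁻¹ • t))⁻¹ := rfl

@[simp] lemma cob_right {C S X : Type*} [Group C] [Group X] [MulAction C S] (F : S → X)
    (g : C) : (cob F g).right = g := rfl

section
universe u v
variable (A : Type u) (B : Type v) [Group A] [Group B]

def qhom : Monoid.Coprod A B →* A × B := Monoid.Coprod.lift (MonoidHom.inl A B) (MonoidHom.inr A B)

local instance actQ : MulAction (Monoid.Coprod A B) (A × B) := MulAction.compHom _ (qhom A B)

variable {A B}

lemma qhom_inl (a : A) : qhom A B (Coprod.inl a) = (a, 1) := rfl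
lemma qhom_inr (b : B) : qhom A B (Coprod.inr b) = (1, b) := rfl
lemma smul_def' (g : Monoid.Coprod A B) (t : A × B) : g • t = qhom A B g * t := rfl

lemma smul_inl (a : A) (t : A × B) : (Coprod.inl a : Monoid.Coprod A B) • t = (a * t.1, t.2) := by
  rw [smul_def', qhom_inl]; ext <;> simp

lemma smul_inr (b : B) (t : A × B) : (Coprod.inr b : Monoid.Coprod A B) • t = (t.1, b * t.2) := by
  rw [smul_def', qhom_inr]; ext <;> simp

lemma inv_smul_inl (a : A) (t : A × B) :
    (Coprod.inl a : Monoid.Coprod A B)⁻¹ • t = (a⁻¹ * t.1, t.2) := by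
  rw [← map_inv, smul_inl]

lemma inv_smul_inr (b : B) (t : A × B) :
    (Coprod.inr b : Monoid.Coprod A B)⁻¹ • t = (t.1, b⁻¹ * t.2) := by
  rw [← map_inv, smul_inr]

variable (A B)

instance transQ : IsPretransitive (Monoid.Coprod A B) (A × B) where
  exists_smul_eq x y := by
    refine ⟨Coprod.inl (y.1 * x.1⁻¹) * Coprod.inr (y.2 * x.2⁻¹), ?_⟩
    rw [mul_smul, smul_inr, smul_inl]
    ext <;> simp

local notation "𝒢" => ActionCategory (Monoid.Coprod A B) (A × B)

instance freeQ : IsFreeGroupoid 𝒢 where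
  quiverGenerators := ⟨fun v w =>
    {p : A × B // p.1 ≠ 1 ∧ ActionCategory.back v = ((1 : A), p.2) ∧ ActionCategory.back w = p} ⊕
    {p : A × B // p.2 ≠ 1 ∧ ActionCategory.back v = (p.1, (1 : B)) ∧ ActionCategory.back w = p}⟩
  of := fun {v w} e =>
    match e with
    | Sum.inl ⟨p, _, hv, hw⟩ => ⟨Coprod.inl p.1,
        show (Coprod.inl p.1 : Monoid.Coprod A B) • ActionCategory.back v =
          ActionCategory.back w by rw [hv, hw, smul_inl]; ext <;> simp⟩
    | Sum.inr ⟨p, _, hv, hw⟩ => ⟨Coprod.inr p.2,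
        show (Coprod.inr p.2 : Monoid.Coprod A B) • ActionCategory.back v =
          ActionCategory.back w by rw [hv, hw, smul_inr]; ext <;> simp⟩
  unique_lift := by
    intro X _ f
    classical
    -- canonical labels
    let fA : A × B → X := fun p =>
      if h : p.1 = 1 then 1 else
        @f (objEquiv (Monoid.Coprod A B) (A × B) ((1 : A), p.2))
          (objEquiv (Monoid.Coprod A B) (A × B) p) (Sum.inl ⟨p, h, rfl, rfl⟩)
    let fB : A × B → X := fun p =>
      if h : p.2 = 1 then 1 else
        @f (objEquiv (Monoid.Coprod A B) (A × B) (p.1, (1 : B)))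
          (objEquiv (Monoid.Coprod A B) (A × B) p) (Sum.inr ⟨p, h, rfl, rfl⟩)
    let Φ : Monoid.Coprod A B →* ((A × B) → X) ⋊[mulAutArrow] Monoid.Coprod A B :=
      Coprod.lift ((cob fA).comp Coprod.inl) ((cob fB).comp Coprod.inr)
    have sane : ∀ g, (Φ g).right = g := by
      intro g
      have : SemidirectProduct.rightHom.comp Φ = MonoidHom.id _ :=
        Coprod.hom_ext (by ext a; rfl) (by ext b; rfl)
      exact DFunLike.ext_iff.mp this g
    have ΦinlL : ∀ (a : A) (t : A × B),
        ((Φ (Coprod.inl a)).left : (A × B) → X) t = fA t * (fA (a⁻¹ * t.1, t.2))⁻¹ := by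
      intro a t
      show ((cob fA (Coprod.inl a)).left : (A × B) → X) t = _
      rw [cob_left, inv_smul_inl]
    have ΦinrL : ∀ (b : B) (t : A × B),
        ((Φ (Coprod.inr b)).left : (A × B) → X) t = fB t * (fB (t.1, b⁻¹ * t.2))⁻¹ := by
      intro b t
      show ((cob fB (Coprod.inr b)).left : (A × B) → X) t = _
      rw [cob_left, inv_smul_inr]
    have fA1 : ∀ y : B, fA (1, y) = 1 := fun y => dif_pos rfl
    have fB1 : ∀ x : A, fB (x, 1) = 1 := fun x => dif_pos rfl
    have fAval : ∀ (px : A) (py : B) (h : px ≠ 1), fA (px, py) =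
        @f (objEquiv (Monoid.Coprod A B) (A × B) ((1 : A), py))
          (objEquiv (Monoid.Coprod A B) (A × B) (px, py))
          (Sum.inl ⟨(px, py), h, rfl, rfl⟩) := fun px py h => dif_neg h
    have fBval : ∀ (px : A) (py : B) (h : py ≠ 1), fB (px, py) =
        @f (objEquiv (Monoid.Coprod A B) (A × B) (px, (1 : B)))
          (objEquiv (Monoid.Coprod A B) (A × B) (px, py))
          (Sum.inr ⟨(px, py), h, rfl, rfl⟩) := fun px py h => dif_neg h
    refine ⟨uncurry Φ sane, ?_, ?_⟩
    · rintro ⟨⟨⟩, vb⟩ ⟨⟨⟩, wb⟩ (⟨⟨px, py⟩, h1, hv, hw⟩ | ⟨⟨px, py⟩, h2, hv, hw⟩)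
      · obtain rfl : vb = ((1 : A), py) := hv
        obtain rfl : wb = (px, py) := hw
        show ((Φ (Coprod.inl px)).left : (A × B) → X) (px, py) = _
        rw [ΦinlL]
        rw [show ((px⁻¹ * ((px, py) : A × B).1, ((px, py) : A × B).2)) = ((1 : A), py) by
          simp, fA1, inv_one, mul_one, fAval px py h1]
        rfl
      · obtain rfl : vb = (px, (1 : B)) := hv
        obtain rfl : wb = (px, py) := hw
        show ((Φ (Coprod.inr py)).left : (A × B) → X) (px, py) = _
        rw [ΦinrL]
        rw [show ((((px, py) : A × B).1, py⁻¹ * ((px, py) : A × B).2)) = (px, (1 : B)) by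
          simp, fB1, inv_one, mul_one, fBval px py h2]
        rfl
    · intro E hE
      set ψ : Monoid.Coprod A B → (A × B) → X := fun g t => ((curry E) g).left t with hψ
      have key : ∀ {a b : 𝒢} (m : a ⟶ b),
          (E.map m : X) = ψ m.val (ActionCategory.back b) := by
        intro a b m
        exact ActionCategory.cases (P := fun {a b} (m : a ⟶ b) =>
          (E.map m : X) = ψ m.val (ActionCategory.back b)) (fun t g => rfl) m
      have ecyc : ∀ (g h : Monoid.Coprod A B) (t : A × B),
          ψ (g * h) t = ψ g t * ψ h (g⁻¹ • t) := by
        intro g h t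
        have h2 := congrFun (congrArg SemidirectProduct.left (map_mul (curry E) g h)) t
        simp only [hψ, SemidirectProduct.mul_left, Pi.mul_apply,
          mulAutArrow_apply'] at h2 ⊢
        exact h2
      have e1 : ∀ t : A × B, ψ 1 t = 1 := by
        intro t
        have h2 := congrFun (congrArg SemidirectProduct.left (map_one (curry E))) t
        simpa only [hψ, SemidirectProduct.one_left, Pi.one_apply] using h2
      have eA : ∀ (x : A) (y : B), ψ (Coprod.inl x) ((x, y) : A × B) = fA (x, y) := by
        intro x y
        by_cases hx : x = 1
        · subst hx
          rw [show (Coprod.inl (1 : A) : Monoid.Coprod A B) = 1 from map_one _, e1, fA1]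
        · have h3 := hE (objEquiv (Monoid.Coprod A B) (A × B) ((1 : A), y))
            (objEquiv (Monoid.Coprod A B) (A × B) (x, y)) (Sum.inl ⟨(x, y), hx, rfl, rfl⟩)
          rw [fAval x y hx, ← h3]
          exact Eq.symm ((key _).trans (by rfl))
      have eB : ∀ (x : A) (y : B), ψ (Coprod.inr y) ((x, y) : A × B) = fB (x, y) := by
        intro x y
        by_cases hy : y = 1
        · subst hy
          rw [show (Coprod.inr (1 : B) : Monoid.Coprod A B) = 1 from map_one _, e1, fB1]
        · have h3 := hE (objEquiv (Monoid.Coprod A B) (A × B) (x, (1 : B)))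
            (objEquiv (Monoid.Coprod A B) (A × B) (x, y)) (Sum.inr ⟨(x, y), hy, rfl, rfl⟩)
          rw [fBval x y hy, ← h3]
          exact Eq.symm ((key _).trans (by rfl))
      have eA' : ∀ (a : A) (t : A × B),
          ψ (Coprod.inl a) t = fA t * (fA (a⁻¹ * t.1, t.2))⁻¹ := by
        rintro a ⟨x, y⟩
        have hsplit : (Coprod.inl x : Monoid.Coprod A B) =
            Coprod.inl a * Coprod.inl (a⁻¹ * x) := by rw [← map_mul, mul_inv_cancel_left]
        have h4 := eA x y
        rw [hsplit, ecyc, inv_smul_inl] at h4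
        dsimp only at h4
        rw [eA] at h4
        have h2 : ψ (Coprod.inl a) ((x, y) : A × B) = fA (x, y) * (fA (a⁻¹ * x, y))⁻¹ := by
          rw [← h4]; group
        simpa using h2
      have eB' : ∀ (b : B) (t : A × B),
          ψ (Coprod.inr b) t = fB t * (fB (t.1, b⁻¹ * t.2))⁻¹ := by
        rintro b ⟨x, y⟩
        have hsplit : (Coprod.inr y : Monoid.Coprod A B) =
            Coprod.inr b * Coprod.inr (b⁻¹ * y) := by rw [← map_mul, mul_inv_cancel_left]
        have h4 := eB x y
        rw [hsplit, ecyc, inv_smul_inr] at h4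
        dsimp only at h4
        rw [eB] at h4
        have h2 : ψ (Coprod.inr b) ((x, y) : A × B) = fB (x, y) * (fB (x, b⁻¹ * y))⁻¹ := by
          rw [← h4]; group
        simpa using h2
      have hcurry : curry E = Φ :=
        Coprod.hom_ext
          (MonoidHom.ext fun a => SemidirectProduct.ext
            (funext fun t => (eA' a t).trans (ΦinlL a t).symm) rfl)
          (MonoidHom.ext fun b => SemidirectProduct.ext
            (funext fun t => (eB' b t).trans (ΦinrL b t).symm) rfl)
      apply Functor.hext
      · intro
        apply Unit.ext
      · refine ActionCategory.cases ?_
        intros t g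
        exact heq_of_eq (show ((curry E) g).left t = (Φ g).left t by rw [hcurry])
noncomputable instance endFreeQ :
    IsFreeGroup (@End 𝒢 (Groupoid.toCategory (obj := 𝒢)).toCategoryStruct (objEquiv (Monoid.Coprod A B) (A × B) ((1 : A), (1 : B)))) :=
  @endIsFreeOfConnectedFree _ _ (by exact (inferInstance : CategoryTheory.IsConnected 𝒢)) _ _

lemma ker_qhom_isFree : IsFreeGroup (MonoidHom.ker (qhom A B)) := by
  letI e1 : MonoidHom.ker (qhom A B) ≃*
      stabilizerSubmonoid (Monoid.Coprod A B) (((1 : A), (1 : B)) : A × B) :=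
    { toFun := fun g => ⟨g.1, by
        show g.1 • (((1 : A), (1 : B)) : A × B) = ((1 : A), (1 : B))
        rw [smul_def', g.2]
        simp⟩
      invFun := fun g => ⟨g.1, by
        have h : g.1 • (((1 : A), (1 : B)) : A × B) = ((1 : A), (1 : B)) := g.2
        rw [smul_def'] at h
        have : qhom A B g.1 * (1 : A × B) = (1 : A × B) := h
        rwa [mul_one] at this⟩
      left_inv := fun g => rfl
      right_inv := fun g => rfl
      map_mul' := fun g h => rfl }
  have e2 : (@End 𝒢 (Groupoid.toCategory (obj := 𝒢)).toCategoryStruct (objEquiv (Monoid.Coprod A B) (A × B) ((1 : A), (1 : B)))) ≃*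
      MonoidHom.ker (qhom A B) :=
    MulEquiv.symm (e1.trans (stabilizerIsoEnd (Monoid.Coprod A B) (((1 : A), (1 : B)) : A × B)))
  haveI hfree : IsFreeGroup
      (@End 𝒢 (Groupoid.toCategory (obj := 𝒢)).toCategoryStruct (objEquiv (Monoid.Coprod A B) (A × B) ((1 : A), (1 : B)))) :=
    endFreeQ A B
  exact ((IsFreeGroup.basis
    (@End 𝒢 (Groupoid.toCategory (obj := 𝒢)).toCategoryStruct (objEquiv (Monoid.Coprod A B) (A × B) ((1 : A), (1 : B))))).map e2).isFreeGroup

end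

/-- If `G` is a subgroup of the free product `A * B`, the kernel of the restriction
to `G` of the canonical projection `q : A * B → A × B` is a free group. -/
theorem kernel_restriction_coprod_to_prod_isFree (A B : Type*) [Group A] [Group B]
    (G : Subgroup (Monoid.Coprod A B)) :
    IsFreeGroup
      (MonoidHom.ker
        ((Monoid.Coprod.lift (MonoidHom.inl A B) (MonoidHom.inr A B)).comp
          G.subtype)) := by
  haveI hker : IsFreeGroup (MonoidHom.ker (qhom A B)) := ker_qhom_isFree A B
  let φ : MonoidHom.ker
      ((Monoid.Coprod.lift (MonoidHom.inl A B) (MonoidHom.inr A B)).comp G.subtype) →*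
      MonoidHom.ker (qhom A B) :=
    { toFun := fun x => ⟨(x.1 : Monoid.Coprod A B), x.2⟩
      map_one' := rfl
      map_mul' := fun _ _ => rfl }
  have hφ : Function.Injective φ := by
    intro x y h
    have h1 : (φ x).1 = (φ y).1 := congrArg Subtype.val h
    have h2 : (x : ↥G) = (y : ↥G) := Subtype.ext h1
    exact Subtype.ext h2
  haveI : IsFreeGroup (MonoidHom.range φ) := subgroupIsFreeOfIsFree _
  exact ((IsFreeGroup.basis (MonoidHom.range φ)).map
    (MonoidHom.ofInjective hφ).symm).isFreeGroup
end

section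
/- Let G_1, …, G_n and H be groups and let f : G_1 * ⋯ * G_n → H be a group homomorphism whose restriction to each free factor G_i is injective. Then the kernel of f is a free group. -/
open CategoryTheory MulAction SemidirectProduct IsFreeGroupoid Monoid

namespace KuroshAux

variable {n : ℕ} {G : Fin n → Type*} [∀ i, Group (G i)] {H : Type*} [Group H]
  (f : Monoid.CoprodI G →* H)

/-- The coset space on which the free product acts. -/
abbrev A := Monoid.CoprodI G ⧸ f.ker

/-- Each factor acts freely on the coset space of the kernel. -/
theorem smul_free (hf : ∀ i : Fin n, Function.Injective (f.comp (Monoid.CoprodI.of (i := i))))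
    {i : Fin n} {g : G i} {a : A f} (h : CoprodI.of g • a = a) : g = 1 := by
  induction a using QuotientGroup.induction_on with
  | H w =>
    have h2 : (QuotientGroup.mk (CoprodI.of g * w) : A f) = QuotientGroup.mk w := by
      rw [← h]; rfl
    have h4 : f (CoprodI.of g * w) = f w := by
      have := congrArg (QuotientGroup.kerLift f) h2
      simpa using this
    rw [map_mul] at h4
    have h3 : f (CoprodI.of g) = 1 := by
      have := mul_right_cancel (h4.trans (one_mul (f w)).symm)
      exact this
    apply hf i
    simp [h3]

theorem smul_cancel (hf : ∀ i : Fin n, Function.Injective (f.comp (Monoid.CoprodI.of (i := i))))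
    {i : Fin n} {g g' : G i} {a : A f}
    (h : CoprodI.of g • a = CoprodI.of g' • a) : g = g' := by
  have : CoprodI.of (g'⁻¹ * g) • a = a := by
    rw [map_mul, map_inv, mul_smul, h, inv_smul_smul]
  have h1 := smul_free f hf this
  rwa [inv_mul_eq_one, eq_comm] at h1

/-- The orbit equivalence relation of the `i`-th factor acting on `A f`. -/
def orb (i : Fin n) : Setoid (A f) where
  r a b := ∃ g : G i, CoprodI.of g • a = b
  iseqv := by
    constructor
    · exact fun a => ⟨1, by simp⟩
    · rintro a b ⟨g, rfl⟩; exact ⟨g⁻¹, by simp⟩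
    · rintro a b c ⟨g, rfl⟩ ⟨g', rfl⟩; exact ⟨g' * g, by rw [map_mul, mul_smul]⟩

/-- A representative of the `i`-orbit of `a`. -/
noncomputable def rep (i : Fin n) (a : A f) : A f :=
  (Quotient.mk (orb f i) a).out

theorem rep_spec (i : Fin n) (a : A f) : ∃ g : G i, CoprodI.of g • rep f i a = a :=
  Quotient.exact ((Quotient.mk (orb f i) a).out_eq)

theorem rep_eq_of_smul {i : Fin n} (g : G i) (a : A f) :
    rep f i (CoprodI.of g • a) = rep f i a := by
  have h : Quotient.mk (orb f i) (CoprodI.of g • a) = Quotient.mk (orb f i) a :=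
    Quotient.sound ⟨g⁻¹, by simp⟩
  unfold rep
  rw [h]

theorem rep_rep (i : Fin n) (a : A f) : rep f i (rep f i a) = rep f i a := by
  obtain ⟨g, hg⟩ := rep_spec f i a
  conv_rhs => rw [← hg, rep_eq_of_smul]

/-- The unique element of `G i` carrying the orbit representative to `a`. -/
noncomputable def gU (i : Fin n) (a : A f) : G i := (rep_spec f i a).choose

theorem gU_spec (i : Fin n) (a : A f) : CoprodI.of (gU f i a) • rep f i a = a :=
  (rep_spec f i a).choose_spec

theorem gU_unique (hf : ∀ i : Fin n, Function.Injective (f.comp (Monoid.CoprodI.of (i := i))))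
    {i : Fin n} {g : G i} {a : A f}
    (h : CoprodI.of g • rep f i a = a) : g = gU f i a :=
  smul_cancel f hf (by rw [h, gU_spec])

theorem gU_rep (hf : ∀ i : Fin n, Function.Injective (f.comp (Monoid.CoprodI.of (i := i))))
    (i : Fin n) (a : A f) : gU f i (rep f i a) = 1 :=
  (gU_unique f hf (by rw [rep_rep, map_one, one_smul])).symm

/-- The generating quiver of the action groupoid: for each `i` and each `i`-orbit,
a star of arrows from the chosen representative to the other points of the orbit. -/
noncomputable instance genQuiver :
    Quiver (Generators (ActionCategory (CoprodI G) (A f))) where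
  Hom a b := { p : Σ i : Fin n, G i //
      CoprodI.of p.2 • (ActionCategory.back (M := CoprodI G) a) = b.back ∧
      p.2 ≠ 1 ∧ a.back = rep f p.1 b.back }

/-- Interpreting a generating arrow as a morphism of the action groupoid. -/
noncomputable def genOf {a b : Generators (ActionCategory (CoprodI G) (A f))}
    (e : a ⟶ b) : (show ActionCategory (CoprodI G) (A f) from a) ⟶ b :=
  ⟨CoprodI.of e.1.2, e.2.1⟩

section Lift

theorem mulAutArrow_apply {G A M : Type*} [Group G] [MulAction G A] [Group M]
    (g : G) (u : A → M) (a : A) : mulAutArrow g u a = u (g⁻¹ • a) := by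
  simp only [mulAutArrow, MulDistribMulAction.toMulAut_apply, MulDistribMulAction.toMulEquiv_apply]
  rfl

/-- An element of the coset space as an object of the action groupoid. -/
def pt (x : A f) : ActionCategory (CoprodI G) (A f) := ActionCategory.objEquiv (CoprodI G) (A f) x

@[simp] theorem pt_back (x : A f) : (pt f x).back = x := rfl

/-- The same object, viewed in the type synonym carrying the generating quiver. -/
abbrev ptG (x : A f) : Generators (ActionCategory (CoprodI G) (A f)) := pt f x

variable {X : Type*} [Group X]

/-- The generating arrow from the orbit representative of `a` to `a`. -/
noncomputable def genArrow (i : Fin n) (a : A f) (h : gU f i a ≠ 1) :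
    ptG f (rep f i a) ⟶ ptG f a :=
  ⟨⟨i, gU f i a⟩, gU_spec f i a, h, rfl⟩

open scoped Classical in
/-- The label of the arrow into `a`, or `1` if `a` is an orbit representative. -/
noncomputable def vfun (ℓ : Quiver.Labelling (Generators (ActionCategory (CoprodI G) (A f))) X)
    (i : Fin n) (a : A f) : X :=
  if h : gU f i a = 1 then 1 else ℓ (genArrow f i a h)

theorem vfun_rep (ℓ : Quiver.Labelling (Generators (ActionCategory (CoprodI G) (A f))) X)
    (hf : ∀ i : Fin n, Function.Injective (f.comp (Monoid.CoprodI.of (i := i))))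
    (i : Fin n) (a : A f) : vfun f ℓ i (rep f i a) = 1 := by
  rw [vfun, dif_pos (gU_rep f hf i a)]

/-- The homomorphism on the `i`-th factor which will induce the lifted functor. -/
noncomputable def phi (ℓ : Quiver.Labelling (Generators (ActionCategory (CoprodI G) (A f))) X)
    (i : Fin n) : G i →* (A f → X) ⋊[mulAutArrow] CoprodI G where
  toFun g := ⟨fun b => vfun f ℓ i b * (vfun f ℓ i ((CoprodI.of g)⁻¹ • b))⁻¹, CoprodI.of g⟩
  map_one' := by
    ext b
    · simp
    · simp
  map_mul' g h := by
    ext b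
    · show _ = _ * (mulAutArrow (CoprodI.of g) (fun b => vfun f ℓ i b * (vfun f ℓ i ((CoprodI.of h)⁻¹ • b))⁻¹) : A f → X) b
      rw [mulAutArrow_apply]
      simp [map_mul, mul_smul, mul_assoc]
    · simp

/-- The scalar label of a morphism of the action groupoid, with its honest type. -/
def mval {x y : A f} (m : pt f x ⟶ pt f y) : CoprodI G := m.val

theorem map_eq_map (E : ActionCategory (CoprodI G) (A f) ⥤ SingleObj X)
    {x y z : A f} (h : x = y) (m₁ : pt f x ⟶ pt f z)
    (m₂ : pt f y ⟶ pt f z) (hm : mval f m₁ = mval f m₂) :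
    E.map m₁ = E.map m₂ := by
  subst h
  exact congrArg E.map (Subtype.ext hm)

theorem map_eq_one (E : ActionCategory (CoprodI G) (A f) ⥤ SingleObj X)
    {x y : A f} (h : x = y) (m : pt f x ⟶ pt f y)
    (hm : mval f m = 1) : E.map m = 1 := by
  subst h
  have h1 : m = 𝟙 (pt f x) := Subtype.ext hm
  rw [h1, CategoryTheory.Functor.map_id]
  rfl

/-- The canonical morphism from the orbit representative to `a`. -/
noncomputable def arrowE (i : Fin n) (a : A f) :
    pt f (rep f i a) ⟶ pt f a :=
  ⟨CoprodI.of (gU f i a), gU_spec f i a⟩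

theorem map_arrowE (ℓ : Quiver.Labelling (Generators (ActionCategory (CoprodI G) (A f))) X)
    (hf : ∀ i : Fin n, Function.Injective (f.comp (Monoid.CoprodI.of (i := i))))
    (E : ActionCategory (CoprodI G) (A f) ⥤ SingleObj X)
    (hE : ∀ a b (e : a ⟶ b), E.map (genOf f e) = ℓ e) (i : Fin n) (a : A f) :
    E.map (arrowE f i a) = vfun f ℓ i a := by
  classical
  by_cases h : gU f i a = 1
  · rw [vfun, dif_pos h]
    apply map_eq_one
    · have := gU_spec f i a
      rw [h] at this
      simpa using this
    · show CoprodI.of (gU f i a) = 1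
      rw [h, map_one]
  · rw [vfun, dif_neg h]
    exact hE _ _ (genArrow f i a h)

theorem map_homOfPair (ℓ : Quiver.Labelling (Generators (ActionCategory (CoprodI G) (A f))) X)
    (hf : ∀ i : Fin n, Function.Injective (f.comp (Monoid.CoprodI.of (i := i))))
    (E : ActionCategory (CoprodI G) (A f) ⥤ SingleObj X)
    (hE : ∀ a b (e : a ⟶ b), E.map (genOf f e) = ℓ e) (i : Fin n) (g : G i) (b : A f) :
    E.map (ActionCategory.homOfPair b (CoprodI.of g))
      = vfun f ℓ i b * (vfun f ℓ i ((CoprodI.of g)⁻¹ • b))⁻¹ := by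
  have hrep : rep f i ((CoprodI.of g)⁻¹ • b) = rep f i b := by
    conv_rhs => rw [show b = CoprodI.of g • ((CoprodI.of g)⁻¹ • b) from
      (smul_inv_smul _ b).symm, rep_eq_of_smul]
  have hval : CoprodI.of g * CoprodI.of (gU f i ((CoprodI.of g)⁻¹ • b))
      = CoprodI.of (gU f i b) := by
    rw [← map_mul]
    congr 1
    apply gU_unique f hf
    rw [map_mul, mul_smul, ← hrep, gU_spec, smul_inv_smul]
  have hcomp : E.map (arrowE f i ((CoprodI.of g)⁻¹ • b)
        ≫ (show pt f ((CoprodI.of g)⁻¹ • b) ⟶ pt f b from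
            ActionCategory.homOfPair b (CoprodI.of g)))
      = E.map (arrowE f i b) := by
    apply map_eq_map f E hrep
    exact hval
  rw [CategoryTheory.Functor.map_comp, SingleObj.comp_as_mul,
    map_arrowE f ℓ hf E hE, map_arrowE f ℓ hf E hE] at hcomp
  exact eq_mul_inv_of_mul_eq hcomp

theorem spec_aux
    (hf : ∀ i : Fin n, Function.Injective (f.comp (Monoid.CoprodI.of (i := i))))
    (ℓ : Quiver.Labelling (Generators (ActionCategory (CoprodI G) (A f))) X)
    {x y : A f} (e : ptG f x ⟶ ptG f y) :
    (CoprodI.lift (phi f ℓ) (mval f (genOf f e))).left y = ℓ e := by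
  classical
  obtain ⟨⟨i, g⟩, hsm, hne, hrep⟩ := e
  have hsm0 : CoprodI.of g • x = y := hsm
  have hrep' : x = rep f i y := hrep
  subst hrep'
  have hgu : g = gU f i y := gU_unique f hf hsm0
  show (CoprodI.lift (phi f ℓ) (CoprodI.of g)).left y = _
  rw [CoprodI.lift_of]
  show vfun f ℓ i y * (vfun f ℓ i ((CoprodI.of g)⁻¹ • y))⁻¹ = _
  have ha : (CoprodI.of g)⁻¹ • y = rep f i y := by
    rw [inv_smul_eq_iff]
    exact hsm0.symm
  rw [ha, vfun_rep f ℓ hf, inv_one, mul_one, vfun, dif_neg (hgu ▸ hne)]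
  have harr : genArrow f i y (hgu ▸ hne)
      = (⟨⟨i, g⟩, hsm, hne, hrep⟩ : ptG f (rep f i y) ⟶ ptG f y) := by
    apply Subtype.ext
    show (⟨i, gU f i y⟩ : Σ i, G i) = ⟨i, g⟩
    rw [← hgu]
  rw [harr]

theorem unique_lift_aux
    (hf : ∀ i : Fin n, Function.Injective (f.comp (Monoid.CoprodI.of (i := i))))
    (ℓ : Quiver.Labelling (Generators (ActionCategory (CoprodI G) (A f))) X) :
    ∃! F : ActionCategory (CoprodI G) (A f) ⥤ SingleObj X,
      ∀ a b (e : a ⟶ b), F.map (genOf f e) = ℓ e := by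
  classical
  have sane : ∀ w, (CoprodI.lift (phi f ℓ) w).right = w := by
    have h : rightHom.comp (CoprodI.lift (phi f ℓ)) = MonoidHom.id _ := by
      apply CoprodI.ext_hom
      intro i
      ext g
      simp [phi]
    exact fun w => DFunLike.ext_iff.mp h w
  refine ⟨ActionCategory.uncurry (CoprodI.lift (phi f ℓ)) sane, ?_, ?_⟩
  · intro a b e
    exact spec_aux f hf ℓ e
  · intro E hE
    have hc : ActionCategory.curry E = CoprodI.lift (phi f ℓ) := by
      apply CoprodI.ext_hom
      intro i
      ext g
      · show E.map (ActionCategory.homOfPair _ (CoprodI.of g)) = _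
        rw [map_homOfPair f ℓ hf E hE i g]
        rfl
      · rfl
    apply CategoryTheory.Functor.hext
    · intro
      apply Unit.ext
    · refine ActionCategory.cases ?_
      intro t gg
      apply heq_of_eq
      show _ = ((CoprodI.lift (phi f ℓ)) gg).left t
      rw [← hc]
      rfl

end Lift

/-- The action groupoid of the free product on the cosets of the kernel is free. -/
noncomputable def isFreeGroupoid
    (hf : ∀ i : Fin n, Function.Injective (f.comp (Monoid.CoprodI.of (i := i)))) :
    IsFreeGroupoid (ActionCategory (CoprodI G) (A f)) where
  quiverGenerators := genQuiver f
  of := genOf f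
  unique_lift := fun {X} _ ℓ => unique_lift_aux f hf ℓ

end KuroshAux

/-- If `f : G₁ * ⋯ * Gₙ → H` is a homomorphism from a free product which is injective
on each free factor `Gᵢ`, then the kernel of `f` is a free group. -/
theorem kernel_isFree_of_injective_on_factors (n : ℕ) (G : Fin n → Type*)
    [∀ i, Group (G i)] (H : Type*) [Group H] (f : Monoid.CoprodI G →* H)
    (hf : ∀ i : Fin n, Function.Injective (f.comp (Monoid.CoprodI.of (i := i)))) :
    IsFreeGroup (MonoidHom.ker f) := by
  letI := KuroshAux.isFreeGroupoid f hf
  exact @IsFreeGroup.ofMulEquiv _ (@CategoryTheory.End.group (ActionCategory (CoprodI G) (CoprodI G ⧸ f.ker)) _ (ActionCategory.objEquiv (CoprodI G) (CoprodI G ⧸ f.ker) ↑(1 : CoprodI G))) (@IsFreeGroupoid.endIsFreeOfConnectedFree (ActionCategory (CoprodI G) (CoprodI G ⧸ f.ker)) _ ActionCategory.instIsConnectedOfIsPretransitiveOfNonempty _ _) _ _ (ActionCategory.endMulEquivSubgroup f.ker)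
end

section
/- Let π and Γ be nontrivial groups. The kernel of the canonical projection q : π * Γ → π × Γ is a free group whose rank (when π and Γ are finite) equals (|π| − 1)(|Γ| − 1); it is freely generated by the commutators [a,b] = a b a^{-1} b^{-1} for a ∈ π \ {1}, b ∈ Γ \ {1}. -/
namespace KernelCoprodAux

open Monoid

variable {π Γ : Type*} [Group π] [Group Γ]

/-- Index type for the basis. -/
abbrev Idx (π Γ : Type*) [Group π] [Group Γ] := {a : π // a ≠ 1} × {b : Γ // b ≠ 1}

open Classical in
/-- Generator, extended by 1 when one of the arguments is trivial. -/
noncomputable def xt (c : π) (d : Γ) : FreeGroup (Idx π Γ) :=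
  if h : c ≠ 1 ∧ d ≠ 1 then FreeGroup.of (⟨c, h.1⟩, ⟨d, h.2⟩) else 1

@[simp] lemma xt_one_left (d : Γ) : xt (1 : π) d = 1 := by simp [xt]

@[simp] lemma xt_one_right (c : π) : xt c (1 : Γ) = 1 := by simp [xt]

/-- The commutator `[inl c, inr d]` in the coproduct. -/
def χ (c : π) (d : Γ) : Monoid.Coprod π Γ :=
  Coprod.inl c * Coprod.inr d * Coprod.inl c⁻¹ * Coprod.inr d⁻¹

@[simp] lemma χ_one_left (d : Γ) : χ (1 : π) d = 1 := by
  simp [χ, mul_assoc, ← map_mul]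

@[simp] lemma χ_one_right (c : π) : χ c (1 : Γ) = 1 := by
  simp [χ, mul_assoc, ← map_mul]

/-- The map from the free group on the commutator generators to the coproduct. -/
noncomputable def φ : FreeGroup (Idx π Γ) →* Monoid.Coprod π Γ :=
  FreeGroup.lift fun i => χ i.1.1 i.2.1

@[simp] lemma φ_of (i : Idx π Γ) : φ (FreeGroup.of i) = χ i.1.1 i.2.1 :=
  FreeGroup.lift_apply_of

lemma φ_xt (c : π) (d : Γ) : φ (xt c d) = χ c d := by
  by_cases hc : c = 1
  · simp [hc]
  by_cases hd : d = 1
  · simp [hd]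
  simp [xt, hc, hd]

/-- The state space on which the coproduct acts. -/
abbrev X (π Γ : Type*) [Group π] [Group Γ] := FreeGroup (Idx π Γ) × π × Γ

/-- Action of `π` on the state space. -/
def Lmap : π →* Function.End (X π Γ) where
  toFun p' := fun x => (x.1, p' * x.2.1, x.2.2)
  map_one' := by funext x; simp [Function.End.one_def]
  map_mul' p' p'' := by funext x; erw [Function.End.mul_def]; simp [Function.End.mul_def, mul_assoc]

/-- Action of `Γ` on the state space. -/
noncomputable def Mmap : Γ →* Function.End (X π Γ) where
  toFun g' := fun x =>
    ((xt x.2.1⁻¹ (x.2.2⁻¹ * g'⁻¹))⁻¹ * xt x.2.1⁻¹ x.2.2⁻¹ * x.1, x.2.1, g' * x.2.2)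
  map_one' := by funext x; simp [Function.End.one_def]
  map_mul' g' g'' := by
    funext x
    erw [Function.End.mul_def]
    simp [Function.End.mul_def, Prod.ext_iff, mul_inv_rev, mul_assoc]

/-- The action of the coproduct. -/
noncomputable def A : Monoid.Coprod π Γ →* Function.End (X π Γ) :=
  Coprod.lift Lmap Mmap

lemma A_inl (p' : π) (x : X π Γ) : A (Coprod.inl p') x = (x.1, p' * x.2.1, x.2.2) := by
  simp only [A, Coprod.lift_apply_inl]; rfl

lemma A_inr (g' : Γ) (x : X π Γ) :
    A (Coprod.inr g') x =
      ((xt x.2.1⁻¹ (x.2.2⁻¹ * g'⁻¹))⁻¹ * xt x.2.1⁻¹ x.2.2⁻¹ * x.1, x.2.1, g' * x.2.2) := by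
  simp only [A, Coprod.lift_apply_inr]; rfl

lemma A_mul (z z' : Monoid.Coprod π Γ) (x : X π Γ) : A (z * z') x = A z (A z' x) := by
  rw [map_mul]; rfl

/-- The canonical projection. -/
noncomputable abbrev q : Monoid.Coprod π Γ →* π × Γ :=
  Coprod.lift (MonoidHom.inl π Γ) (MonoidHom.inr π Γ)

lemma q_φ (w : FreeGroup (Idx π Γ)) : q (φ w) = 1 := by
  have : (q.comp φ : FreeGroup (Idx π Γ) →* π × Γ) = 1 := by
    apply FreeGroup.ext_hom
    intro i
    simp [χ, Prod.ext_iff, mul_assoc]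
  calc q (φ w) = (q.comp φ) w := rfl
    _ = 1 := by rw [this]; rfl

/-- The second and third components of the action record the image under `q`. -/
lemma A_snd (z : Monoid.Coprod π Γ) (x : X π Γ) :
    (A z x).2 = ((q z).1 * x.2.1, (q z).2 * x.2.2) := by
  induction z using Coprod.induction_on generalizing x with
  | inl p => simp [A_inl]
  | inr g => simp [A_inr]
  | mul z z' hz hz' =>
    rw [A_mul, hz, hz', map_mul]
    simp [mul_assoc]

/-- The decoding map. -/
noncomputable def Θ (x : X π Γ) : Monoid.Coprod π Γ :=
  Coprod.inl x.2.1 * Coprod.inr x.2.2 * φ x.1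

lemma Θ_A (z : Monoid.Coprod π Γ) (x : X π Γ) : Θ (A z x) = z * Θ x := by
  induction z using Coprod.induction_on generalizing x with
  | inl p =>
    rw [A_inl]
    simp only [Θ, map_mul, mul_assoc]
  | inr g =>
    rw [A_inr]
    simp only [Θ, map_mul, map_inv, φ_xt, χ]
    simp only [map_mul, map_inv, mul_inv_rev, inv_inv]
    group
  | mul z z' hz hz' =>
    rw [A_mul, hz, hz', mul_assoc]

lemma A_φ_of (i : Idx π Γ) (v : FreeGroup (Idx π Γ)) :
    A (φ (FreeGroup.of i)) (v, 1, 1) = (FreeGroup.of i * v, 1, 1) := by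
  obtain ⟨a, b⟩ := i
  have h1 : φ (FreeGroup.of (a, b)) =
      Coprod.inl a.1 * (Coprod.inr b.1 * (Coprod.inl a.1⁻¹ * Coprod.inr b.1⁻¹)) := by
    simp [χ, mul_assoc]
  rw [h1, A_mul, A_mul, A_mul, A_inr, A_inl, A_inr, A_inl]
  simp only [inv_one, one_mul, mul_one, xt_one_left, xt_one_right, inv_inv, mul_inv_cancel,
    inv_mul_cancel]
  simp [xt, a.2, b.2]

lemma A_φ (w v : FreeGroup (Idx π Γ)) : A (φ w) (v, 1, 1) = (w * v, 1, 1) := by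
  induction w using FreeGroup.induction_on generalizing v with
  | C1 => simp [Function.End.one_def]
  | of i => exact A_φ_of i v
  | inv_of i _ =>
    rw [map_inv]
    set z := φ (FreeGroup.of i) with hz
    have hq : q z⁻¹ = 1 := by rw [map_inv, hz, q_φ, inv_one]
    have key : A z (A z⁻¹ (v, 1, 1)) = (v, 1, 1) := by
      rw [← A_mul, mul_inv_cancel, map_one]
      rfl
    have h2 := A_snd z⁻¹ ((v, 1, 1) : X π Γ)
    rw [hq] at h2
    simp only [Prod.fst_one, one_mul, Prod.snd_one, mul_one] at h2
    set y := A z⁻¹ ((v, 1, 1) : X π Γ) with hy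
    have hy' : y = (y.1, 1, 1) := by
      rw [Prod.ext_iff]; exact ⟨rfl, h2⟩
    rw [hy', hz, A_φ_of] at key
    have hkey : FreeGroup.of i * y.1 = v := (Prod.ext_iff.1 key).1
    have hy1 : y.1 = (FreeGroup.of i)⁻¹ * v := by
      rw [← hkey]; group
    show y = ((FreeGroup.of i)⁻¹ * v, 1, 1)
    rw [hy', hy1]
  | mul w w' hw hw' =>
    rw [map_mul, A_mul, hw', hw, mul_assoc]

lemma φ_injective : Function.Injective (φ : FreeGroup (Idx π Γ) →* Monoid.Coprod π Γ) := by
  rw [injective_iff_map_eq_one]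
  intro w hw
  have := A_φ w 1
  rw [hw, map_one] at this
  have : ((1 : FreeGroup (Idx π Γ)), (1 : π), (1 : Γ)) = (w * 1, 1, 1) := this
  simpa using (Prod.ext_iff.1 this).1.symm

lemma φ_mem_ker (w : FreeGroup (Idx π Γ)) : φ w ∈ MonoidHom.ker (q : Monoid.Coprod π Γ →* π × Γ) :=
  q_φ w

/-- The codomain-restricted map to the kernel. -/
noncomputable def φ' : FreeGroup (Idx π Γ) →* MonoidHom.ker (q : Monoid.Coprod π Γ →* π × Γ) :=
  φ.codRestrict _ φ_mem_ker

lemma φ'_bijective :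
    Function.Bijective (φ' : FreeGroup (Idx π Γ) →* MonoidHom.ker q) := by
  constructor
  · intro w w' h
    apply φ_injective
    exact congrArg Subtype.val h
  · rintro ⟨z, hz⟩
    rw [MonoidHom.mem_ker] at hz
    have h1 := Θ_A z ((1, 1, 1) : X π Γ)
    have hΘ1 : Θ ((1, 1, 1) : X π Γ) = 1 := by simp [Θ]
    rw [hΘ1, mul_one] at h1
    have h2 := A_snd z ((1, 1, 1) : X π Γ)
    rw [hz] at h2
    simp only [Prod.fst_one, mul_one, Prod.snd_one] at h2
    set y := A z ((1, 1, 1) : X π Γ) with hy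
    have hy' : y = (y.1, 1, 1) := by rw [Prod.ext_iff]; exact ⟨rfl, h2⟩
    refine ⟨y.1, ?_⟩
    apply Subtype.ext
    show φ y.1 = z
    rw [← h1, hy']
    simp [Θ]

lemma card_ne_one (G : Type*) [Group G] [Nontrivial G] :
    Nat.card {a : G // a ≠ 1} = Nat.card G - 1 := by
  rcases finite_or_infinite G with hG | hG
  · haveI : Fintype G := Fintype.ofFinite G
    classical
    rw [Nat.card_eq_fintype_card, Nat.card_eq_fintype_card]
    have : Fintype.card {a : G // a ≠ 1} = Fintype.card G - Fintype.card {a : G // a = 1} :=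
      Fintype.card_subtype_compl _
    rw [this, Fintype.card_subtype_eq (1 : G)]
  · haveI : Infinite {a : G // a ≠ 1} := by
      have h : ({1}ᶜ : Set G).Infinite := (Set.finite_singleton 1).infinite_compl
      have : Infinite ({1}ᶜ : Set G) := h.to_subtype
      exact Infinite.of_injective (fun x : ({1}ᶜ : Set G) => (⟨x.1, x.2⟩ : {a : G // a ≠ 1}))
        (fun x y hxy => Subtype.ext (congrArg Subtype.val hxy))
    rw [Nat.card_eq_zero_of_infinite, Nat.card_eq_zero_of_infinite]

end KernelCoprodAux

open scoped commutatorElement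

open KernelCoprodAux in
/-- For nontrivial groups `π` and `Γ`, the kernel of the canonical projection
`q : π * Γ → π × Γ` is a free group, freely generated by the commutators
`[a,b] = a b a⁻¹ b⁻¹` for `a ∈ π \ {1}`, `b ∈ Γ \ {1}`; in particular its rank
(for finite `π`, `Γ`) is `(|π| - 1)(|Γ| - 1)`. -/
theorem kernel_coprod_to_prod_basis (π Γ : Type*) [Group π] [Group Γ]
    [Nontrivial π] [Nontrivial Γ] :
    (∃ B : FreeGroupBasis ({a : π // a ≠ 1} × {b : Γ // b ≠ 1})
        (MonoidHom.ker (Monoid.Coprod.lift (MonoidHom.inl π Γ) (MonoidHom.inr π Γ))),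
      ∀ (a : {a : π // a ≠ 1}) (b : {b : Γ // b ≠ 1}),
        ((B (a, b) : MonoidHom.ker
            (Monoid.Coprod.lift (MonoidHom.inl π Γ) (MonoidHom.inr π Γ))) :
          Monoid.Coprod π Γ) =
          ⁅(Monoid.Coprod.inl a.1 : Monoid.Coprod π Γ), (Monoid.Coprod.inr b.1 : Monoid.Coprod π Γ)⁆) ∧
    Nat.card ({a : π // a ≠ 1} × {b : Γ // b ≠ 1}) =
      (Nat.card π - 1) * (Nat.card Γ - 1) := by
  constructor
  · let e : FreeGroup (Idx π Γ) ≃* MonoidHom.ker (q : Monoid.Coprod π Γ →* π × Γ) :=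
      MulEquiv.ofBijective φ' φ'_bijective
    refine ⟨FreeGroupBasis.ofRepr e.symm, ?_⟩
    intro a b
    have h1 : (FreeGroupBasis.ofRepr e.symm) ((a, b) : Idx π Γ) =
        e (FreeGroup.of (a, b)) := rfl
    rw [h1]
    have h2 : e (FreeGroup.of ((a, b) : Idx π Γ)) = φ' (FreeGroup.of (a, b)) := rfl
    rw [h2]
    show φ (FreeGroup.of ((a, b) : Idx π Γ)) = _
    rw [φ_of]
    simp [χ, commutatorElement_def, mul_assoc]
  · rw [Nat.card_prod, card_ne_one, card_ne_one]
end
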